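/- Given W_in ∈ ℝ^{p×m} (p ≥ m) with SVD W_in = Ω Σ_in Θᵀ and α ≥ 0, the matrix W_out = Ω Σ_out Θᵀ obtained by clipping each singular value σ_i(W_in) into the interval [√(max{0,1−α}), √(1+α)] minimizes ‖W − W_in‖_F² over all W ∈ ℝ^{p×m} satisfying |σ_i²(W) − 1| ≤ α for all i. -/

import Mathlib

open Matrix

/-- Squared Frobenius norm of a real matrix. -/
noncomputable def frobSq {ι κ : Type*} [Fintype ι] [Fintype κ]
    (A : Matrix ι κ ℝ) : ℝ := ∑ i, ∑ j, (A i j) ^ 2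

/-- `Aᵀ * A` is Hermitian for a real matrix `A` (restores the lemma of the older Mathlib). -/
theorem Matrix.isHermitian_transpose_mul_self {ι κ : Type*} [Fintype ι]
    (A : Matrix ι κ ℝ) : (Aᵀ * A).IsHermitian := by
  simpa using Matrix.isHermitian_conjTranspose_mul_self A

section Helpers

lemma frobSq_col {p m : ℕ} (X : Matrix (Fin p) (Fin m) ℝ) :
    frobSq X = ∑ j, ∑ i, (X i j)^2 := by
  rw [frobSq, Finset.sum_comm]

lemma frobSq_eq_trace {p m : ℕ} (A : Matrix (Fin p) (Fin m) ℝ) :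
    frobSq A = (Aᵀ * A).trace := by
  rw [frobSq, Finset.sum_comm]
  simp [Matrix.trace, Matrix.mul_apply, Matrix.diag, sq]

lemma frobSq_conj {p m : ℕ} (O : Matrix (Fin p) (Fin p) ℝ) (hO : Oᵀ * O = 1)
    (Θ : Matrix (Fin m) (Fin m) ℝ) (hΘ : Θᵀ * Θ = 1)
    (M : Matrix (Fin p) (Fin m) ℝ) :
    frobSq (O * M * Θᵀ) = frobSq M := by
  rw [frobSq_eq_trace, frobSq_eq_trace]
  have h1 : (O * M * Θᵀ)ᵀ * (O * M * Θᵀ) = Θ * (Mᵀ * ((Oᵀ * O) * (M * Θᵀ))) := by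
    simp only [Matrix.transpose_mul, Matrix.transpose_transpose, Matrix.mul_assoc]
  rw [h1, hO, Matrix.one_mul, Matrix.trace_mul_comm]
  have h2 : Mᵀ * (M * Θᵀ) * Θ = Mᵀ * M * (Θᵀ * Θ) := by
    simp only [Matrix.mul_assoc]
  rw [h2, hΘ, Matrix.mul_one]

lemma dot_conj {m k : ℕ} (N : Matrix (Fin k) (Fin k) ℝ)
    (Q : Matrix (Fin k) (Fin m) ℝ) (x : Fin m → ℝ) :
    x ⬝ᵥ ((Qᵀ * N * Q) *ᵥ x) = (Q *ᵥ x) ⬝ᵥ (N *ᵥ (Q *ᵥ x)) := by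
  rw [← Matrix.mulVec_mulVec, ← Matrix.mulVec_mulVec, Matrix.dotProduct_mulVec x Qᵀ,
    Matrix.vecMul_transpose]

lemma dot_norm_conj {m k : ℕ} (Q : Matrix (Fin k) (Fin m) ℝ) (hQ : Qᵀ * Q = 1)
    (x : Fin m → ℝ) : (Q *ᵥ x) ⬝ᵥ (Q *ᵥ x) = x ⬝ᵥ x := by
  have := dot_conj (1 : Matrix (Fin k) (Fin k) ℝ) Q x
  rw [Matrix.mul_one, hQ, Matrix.one_mulVec, Matrix.one_mulVec] at this
  exact this.symm

lemma quadform_of_eig {m : ℕ} (N : Matrix (Fin m) (Fin m) ℝ) (hN : N.IsHermitian)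
    (a b : ℝ) (ha : ∀ i, a ≤ hN.eigenvalues i) (hb : ∀ i, hN.eigenvalues i ≤ b)
    (x : Fin m → ℝ) :
    a * (x ⬝ᵥ x) ≤ x ⬝ᵥ (N *ᵥ x) ∧ x ⬝ᵥ (N *ᵥ x) ≤ b * (x ⬝ᵥ x) := by
  set U : Matrix (Fin m) (Fin m) ℝ := (hN.eigenvectorUnitary : Matrix (Fin m) (Fin m) ℝ)
  have hstar : star U = Uᵀ := Matrix.conjTranspose_eq_transpose_of_trivial U
  have hUU : U * Uᵀ = 1 := by
    rw [← hstar]; exact (Matrix.mem_unitaryGroup_iff).mp hN.eigenvectorUnitary.2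
  have hspec : N = (Uᵀ)ᵀ * Matrix.diagonal hN.eigenvalues * Uᵀ := by
    rw [Matrix.transpose_transpose, ← hstar]
    have := hN.spectral_theorem
    simpa using this
  set y : Fin m → ℝ := Uᵀ *ᵥ x with hy
  have hquad : x ⬝ᵥ (N *ᵥ x) = ∑ i, hN.eigenvalues i * (y i) ^ 2 := by
    have h0 := congrArg (fun M => x ⬝ᵥ (M *ᵥ x)) hspec
    rw [h0, dot_conj]
    simp only [Matrix.mulVec_diagonal, dotProduct, hy]
    exact Finset.sum_congr rfl fun i _ => by ring
  have hnorm : x ⬝ᵥ x = ∑ i, (y i) ^ 2 := by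
    have := dot_norm_conj (Q := Uᵀ) (by rw [Matrix.transpose_transpose]; exact hUU) x
    rw [← this]
    simp [dotProduct, sq, hy]
  rw [hquad, hnorm, Finset.mul_sum, Finset.mul_sum]
  constructor
  · exact Finset.sum_le_sum fun i _ => mul_le_mul_of_nonneg_right (ha i) (sq_nonneg _)
  · exact Finset.sum_le_sum fun i _ => mul_le_mul_of_nonneg_right (hb i) (sq_nonneg _)

lemma eig_of_quadform {m : ℕ} (N : Matrix (Fin m) (Fin m) ℝ) (hN : N.IsHermitian)
    (a b : ℝ)
    (h : ∀ x : Fin m → ℝ, a * (x ⬝ᵥ x) ≤ x ⬝ᵥ (N *ᵥ x) ∧ x ⬝ᵥ (N *ᵥ x) ≤ b * (x ⬝ᵥ x))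
    (i : Fin m) : a ≤ hN.eigenvalues i ∧ hN.eigenvalues i ≤ b := by
  set v : Fin m → ℝ := ⇑(hN.eigenvectorBasis i) with hv
  have hmv : N *ᵥ v = hN.eigenvalues i • v := hN.mulVec_eigenvectorBasis i
  have hvv : v ⬝ᵥ v = 1 := by
    have hn1 : ‖hN.eigenvectorBasis i‖ = 1 := hN.eigenvectorBasis.orthonormal.1 i
    have h1 : (inner ℝ (hN.eigenvectorBasis i) (hN.eigenvectorBasis i) : ℝ) = 1 := by
      rw [real_inner_self_eq_norm_mul_norm, hn1]; norm_num
    rw [PiLp.inner_apply] at h1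
    simpa [dotProduct, hv, RCLike.inner_apply, sq] using h1
  obtain ⟨h1, h2⟩ := h v
  rw [hmv, dotProduct_smul, hvv, smul_eq_mul, mul_one, mul_one] at h1 h2
  exact ⟨h1, h2⟩

lemma quadform_diag {m : ℕ} (d : Fin m → ℝ) (a b : ℝ)
    (h : ∀ j, a ≤ d j ∧ d j ≤ b) (y : Fin m → ℝ) :
    a * (y ⬝ᵥ y) ≤ y ⬝ᵥ (Matrix.diagonal d *ᵥ y) ∧
      y ⬝ᵥ (Matrix.diagonal d *ᵥ y) ≤ b * (y ⬝ᵥ y) := by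
  have hq : y ⬝ᵥ (Matrix.diagonal d *ᵥ y) = ∑ i, d i * (y i)^2 := by
    simp only [Matrix.mulVec_diagonal, dotProduct]
    exact Finset.sum_congr rfl fun i _ => by ring
  have hn : y ⬝ᵥ y = ∑ i, (y i)^2 := by
    simp only [dotProduct, sq]
  rw [hq, hn, Finset.mul_sum, Finset.mul_sum]
  exact ⟨Finset.sum_le_sum fun i _ => mul_le_mul_of_nonneg_right (h i).1 (sq_nonneg _),
    Finset.sum_le_sum fun i _ => mul_le_mul_of_nonneg_right (h i).2 (sq_nonneg _)⟩

lemma key_col {p : ℕ} (c : Fin p → ℝ) (j0 : Fin p) (σ τ T : ℝ)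
    (hσ : 0 ≤ σ) (hτ : 0 ≤ τ) (hT : 0 ≤ T)
    (hlo : τ^2 ≤ ∑ i, (c i)^2) (hhi : ∑ i, (c i)^2 ≤ T^2) :
    (min (max σ τ) T - σ)^2 ≤ ∑ i, (c i - (if i = j0 then σ else 0))^2 := by
  set s := ∑ i, (c i)^2 with hs
  have hs0 : 0 ≤ s := Finset.sum_nonneg fun i _ => sq_nonneg _
  set r := Real.sqrt s with hr
  have hr2 : r^2 = s := Real.sq_sqrt hs0
  have hr0 : 0 ≤ r := Real.sqrt_nonneg _
  have hcj : (c j0)^2 ≤ s := Finset.single_le_sum (fun i _ => sq_nonneg (c i)) (Finset.mem_univ j0)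
  have hcr : c j0 ≤ r := by
    calc c j0 ≤ |c j0| := le_abs_self _
    _ = Real.sqrt ((c j0)^2) := (Real.sqrt_sq_eq_abs _).symm
    _ ≤ r := Real.sqrt_le_sqrt hcj
  have hτr : τ ≤ r := by
    rw [← Real.sqrt_sq hτ]; exact Real.sqrt_le_sqrt hlo
  have hrT : r ≤ T := by
    rw [← Real.sqrt_sq hT]; exact Real.sqrt_le_sqrt hhi
  have hexpand : ∑ i, (c i - (if i = j0 then σ else 0))^2 = s - (2*σ*(c j0) - σ^2) := by
    have h1 : ∀ i ∈ Finset.univ, (c i - (if i = j0 then σ else 0))^2 =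
        (c i)^2 - (if i = j0 then 2*σ*(c i) - σ^2 else 0) := by
      intro i _
      by_cases h : i = j0 <;> simp [h] <;> ring
    rw [Finset.sum_congr rfl h1, Finset.sum_sub_distrib, Finset.sum_ite_eq' Finset.univ j0]
    simp [hs]
  rw [hexpand]
  rcases le_total σ τ with h1 | h1
  · have hτT : τ ≤ T := le_trans hτr hrT
    rw [max_eq_right h1, min_eq_left hτT]
    nlinarith [mul_nonneg (sub_nonneg.mpr hτr) (by linarith : (0:ℝ) ≤ r + τ - 2*σ)]
  · rw [max_eq_left h1]
    rcases le_total σ T with h2 | h2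
    · rw [min_eq_left h2]
      nlinarith [sq_nonneg (r - σ), mul_nonneg hσ (sub_nonneg.mpr hcr)]
    · rw [min_eq_right h2]
      nlinarith [mul_nonneg (sub_nonneg.mpr hrT) (by linarith : (0:ℝ) ≤ 2*σ - r - T),
        mul_nonneg hσ (sub_nonneg.mpr hcr)]

end Helpers

/-- Given `W_in ∈ ℝ^{p×m}` (`p ≥ m`) with SVD `W_in = Ω Σ_in Θᵀ` and `α ≥ 0`,
the matrix `W_out = Ω Σ_out Θᵀ`, obtained by clipping each singular value of
`W_in` into `[√(max 0 (1-α)), √(1+α)]`, satisfies the soft orthonormality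
constraints `|σ_i²(W) - 1| ≤ α` (i.e. every eigenvalue `μ` of `WᵀW` satisfies
`|μ - 1| ≤ α`) and minimizes `‖W - W_in‖_F²` over all matrices satisfying
those constraints. -/
theorem soft_orthonormality_projection
    (p m : ℕ) (hpm : m ≤ p) (α : ℝ) (hα : 0 ≤ α)
    (O : Matrix (Fin p) (Fin p) ℝ) (hO : Oᵀ * O = 1)
    (Θ : Matrix (Fin m) (Fin m) ℝ) (hΘ : Θᵀ * Θ = 1)
    (Sin : Matrix (Fin p) (Fin m) ℝ)
    (hdiag : ∀ (i : Fin p) (j : Fin m), (i : ℕ) ≠ (j : ℕ) → Sin i j = 0)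
    (hnonneg : ∀ (i : Fin p) (j : Fin m), (i : ℕ) = (j : ℕ) → 0 ≤ Sin i j)
    (Win : Matrix (Fin p) (Fin m) ℝ) (hWin : Win = O * Sin * Θᵀ)
    (Sout : Matrix (Fin p) (Fin m) ℝ)
    (hSout : ∀ (i : Fin p) (j : Fin m),
      Sout i j =
        if (i : ℕ) = (j : ℕ) then
          min (max (Sin i j) (Real.sqrt (max 0 (1 - α)))) (Real.sqrt (1 + α))
        else 0)
    (Wout : Matrix (Fin p) (Fin m) ℝ) (hWout : Wout = O * Sout * Θᵀ) :
    (∀ i : Fin m,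
        |(Matrix.isHermitian_transpose_mul_self Wout).eigenvalues i - 1| ≤ α) ∧
      ∀ W : Matrix (Fin p) (Fin m) ℝ,
        (∀ i : Fin m,
          |(Matrix.isHermitian_transpose_mul_self W).eigenvalues i - 1| ≤ α) →
        frobSq (Wout - Win) ≤ frobSq (W - Win) := by
  have hO' : O * Oᵀ = 1 := mul_eq_one_comm.mp hO
  have hΘ' : Θ * Θᵀ = 1 := mul_eq_one_comm.mp hΘ
  set a : ℝ := max 0 (1 - α) with ha_def
  set b : ℝ := 1 + α with hb_def
  have ha0 : 0 ≤ a := le_max_left _ _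
  have hb0 : 0 ≤ b := by rw [hb_def]; linarith
  have hab : a ≤ b := max_le (by rw [hb_def]; linarith) (by rw [hb_def]; linarith)
  set τ : ℝ := Real.sqrt a with hτ_def
  set T : ℝ := Real.sqrt b with hT_def
  have hτ2 : τ^2 = a := Real.sq_sqrt ha0
  have hT2 : T^2 = b := Real.sq_sqrt hb0
  have hτ0 : 0 ≤ τ := Real.sqrt_nonneg _
  have hT0 : 0 ≤ T := Real.sqrt_nonneg _
  have hτT : τ ≤ T := Real.sqrt_le_sqrt hab
  set E : Fin m → Fin p := Fin.castLE hpm with hE_def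
  have hEval : ∀ j : Fin m, ((E j : Fin p) : ℕ) = (j : ℕ) := fun j => rfl
  have hEuniq : ∀ (i : Fin p) (j : Fin m), (i : ℕ) = (j : ℕ) → i = E j := by
    intro i j h; exact Fin.ext (by rw [h]; rfl)
  have hclip : ∀ j, Sout (E j) j = min (max (Sin (E j) j) τ) T := by
    intro j; rw [hSout, if_pos (hEval j)]
  have hσ0 : ∀ j, 0 ≤ Sin (E j) j := fun j => hnonneg _ _ (hEval j)
  have hclip_mem : ∀ j, τ ≤ Sout (E j) j ∧ Sout (E j) j ≤ T := by
    intro j; rw [hclip]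
    exact ⟨le_min (le_max_right _ _) hτT, min_le_right _ _⟩
  have hct : ∀ {k l : ℕ} (M : Matrix (Fin k) (Fin l) ℝ), Mᴴ = Mᵀ :=
    fun M => Matrix.conjTranspose_eq_transpose_of_trivial M
  -- Σoutᵀ Σout is diagonal
  have hD : Soutᵀ * Sout = Matrix.diagonal (fun j => (Sout (E j) j)^2) := by
    ext j k
    rw [Matrix.mul_apply, Matrix.diagonal_apply]
    by_cases hjk : j = k
    · subst hjk
      rw [if_pos rfl, Finset.sum_eq_single (E j)]
      · rw [Matrix.transpose_apply, sq]
      · intro i _ hi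
        have hne : (i : ℕ) ≠ (j : ℕ) := fun h => hi (hEuniq i j h)
        rw [Matrix.transpose_apply, hSout i j, if_neg hne, zero_mul]
      · intro h; exact absurd (Finset.mem_univ _) h
    · rw [if_neg hjk]
      apply Finset.sum_eq_zero
      intro i _
      rcases eq_or_ne (i : ℕ) (j : ℕ) with h | h
      · have hik : (i : ℕ) ≠ (k : ℕ) := by
          intro hk
          exact hjk (Fin.ext (by rw [← h, hk]))
        rw [hSout i k, if_neg hik, mul_zero]
      · rw [Matrix.transpose_apply, hSout i j, if_neg h, zero_mul]
  -- eigenvalue bounds for Wout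
  have hquadOut : ∀ x : Fin m → ℝ,
      a * (x ⬝ᵥ x) ≤ x ⬝ᵥ ((Woutᴴ * Wout) *ᵥ x) ∧
        x ⬝ᵥ ((Woutᴴ * Wout) *ᵥ x) ≤ b * (x ⬝ᵥ x) := by
    intro x
    have heq : Woutᴴ * Wout = (Θᵀ)ᵀ * Matrix.diagonal (fun j => (Sout (E j) j)^2) * Θᵀ := by
      rw [hct, hWout, ← hD, Matrix.transpose_transpose]
      simp only [Matrix.transpose_mul, Matrix.transpose_transpose, Matrix.mul_assoc]
      rw [show Oᵀ * (O * (Sout * Θᵀ)) = (Oᵀ * O) * (Sout * Θᵀ) from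
        (Matrix.mul_assoc Oᵀ O (Sout * Θᵀ)).symm, hO, Matrix.one_mul]
    rw [heq, dot_conj]
    have hyx : (Θᵀ *ᵥ x) ⬝ᵥ (Θᵀ *ᵥ x) = x ⬝ᵥ x :=
      dot_norm_conj Θᵀ (by rw [Matrix.transpose_transpose]; exact hΘ') x
    have hd : ∀ j, a ≤ (Sout (E j) j)^2 ∧ (Sout (E j) j)^2 ≤ b := by
      intro j
      obtain ⟨h1, h2⟩ := hclip_mem j
      exact ⟨by rw [← hτ2]; exact pow_le_pow_left₀ hτ0 h1 2,
        by rw [← hT2]; exact pow_le_pow_left₀ (le_trans hτ0 h1) h2 2⟩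
    have := quadform_diag (fun j => (Sout (E j) j)^2) a b hd (Θᵀ *ᵥ x)
    rw [hyx] at this
    exact this
  constructor
  · intro i
    obtain ⟨h1, h2⟩ := eig_of_quadform (Woutᵀ * Wout)
      (Matrix.isHermitian_transpose_mul_self Wout) a b hquadOut i
    rw [abs_le]
    constructor
    · have : 1 - α ≤ a := le_max_right _ _
      linarith
    · rw [hb_def] at h2; linarith
  · intro W hW
    have hNherm := Matrix.isHermitian_transpose_mul_self W
    have heign : ∀ i, a ≤ hNherm.eigenvalues i ∧ hNherm.eigenvalues i ≤ b := by
      intro i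
      have hpos : 0 ≤ hNherm.eigenvalues i :=
        Matrix.eigenvalues_conjTranspose_mul_self_nonneg W i
      have habs := abs_le.mp (hW i)
      exact ⟨max_le hpos (by linarith [habs.1]), by rw [hb_def]; linarith [habs.2]⟩
    have hquadN := quadform_of_eig (Wᴴ * W) hNherm a b
      (fun i => (heign i).1) (fun i => (heign i).2)
    set A : Matrix (Fin p) (Fin m) ℝ := Oᵀ * W * Θ with hA_def
    have hOA : O * A * Θᵀ = W := by
      rw [hA_def, show O * (Oᵀ * W * Θ) * Θᵀ = (O * Oᵀ) * (W * (Θ * Θᵀ)) by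
        simp only [Matrix.mul_assoc], hO', hΘ', Matrix.mul_one, Matrix.one_mul]
    have hWA : W - Win = O * (A - Sin) * Θᵀ := by
      rw [Matrix.mul_sub, Matrix.sub_mul, hOA, hWin]
    have hWoutA : Wout - Win = O * (Sout - Sin) * Θᵀ := by
      rw [Matrix.mul_sub, Matrix.sub_mul, hWout, hWin]
    rw [hWA, hWoutA, frobSq_conj O hO Θ hΘ, frobSq_conj O hO Θ hΘ]
    -- quadratic form bounds for AᵀA
    have hMquad : ∀ x : Fin m → ℝ,
        a * (x ⬝ᵥ x) ≤ x ⬝ᵥ ((Aᵀ * A) *ᵥ x) ∧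
          x ⬝ᵥ ((Aᵀ * A) *ᵥ x) ≤ b * (x ⬝ᵥ x) := by
      intro x
      have heq : Aᵀ * A = Θᵀ * (Wᴴ * W) * Θ := by
        rw [hct, hA_def]
        simp only [Matrix.transpose_mul, Matrix.transpose_transpose, Matrix.mul_assoc]
        rw [show O * (Oᵀ * (W * Θ)) = (O * Oᵀ) * (W * Θ) from
          (Matrix.mul_assoc O Oᵀ (W * Θ)).symm, hO', Matrix.one_mul]
      rw [heq, dot_conj]
      have hyx : (Θ *ᵥ x) ⬝ᵥ (Θ *ᵥ x) = x ⬝ᵥ x := dot_norm_conj Θ hΘ x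
      have := hquadN (Θ *ᵥ x)
      rw [hyx] at this
      exact this
    have hcol : ∀ j : Fin m, τ^2 ≤ ∑ i, (A i j)^2 ∧ ∑ i, (A i j)^2 ≤ T^2 := by
      intro j
      have h := hMquad (Pi.single j 1)
      have h1 : (Pi.single j 1 : Fin m → ℝ) ⬝ᵥ Pi.single j 1 = 1 := by
        rw [dotProduct_single, mul_one, Pi.single_eq_same]
      have h2 : (Pi.single j 1 : Fin m → ℝ) ⬝ᵥ ((Aᵀ * A) *ᵥ Pi.single j 1)
          = ∑ i, (A i j)^2 := by
        rw [Matrix.mulVec_single_one, single_dotProduct, one_mul, Matrix.col_apply,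
          Matrix.mul_apply]
        exact Finset.sum_congr rfl fun i _ => by rw [Matrix.transpose_apply, sq]
      rw [h1, h2, mul_one, mul_one] at h
      rw [hτ2, hT2]
      exact h
    -- columnwise comparison
    rw [frobSq_col (Sout - Sin), frobSq_col (A - Sin)]
    apply Finset.sum_le_sum
    intro j _
    have hSin : ∀ i, Sin i j = if i = E j then Sin (E j) j else 0 := by
      intro i
      by_cases h : i = E j
      · rw [if_pos h, h]
      · rw [if_neg h]
        exact hdiag i j (fun hv => h (hEuniq i j hv))
    have hLHS : ∑ i, ((Sout - Sin) i j)^2 = (Sout (E j) j - Sin (E j) j)^2 := by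
      rw [Finset.sum_eq_single (E j)]
      · rw [Matrix.sub_apply]
      · intro i _ hi
        have hne : (i : ℕ) ≠ (j : ℕ) := fun h => hi (hEuniq i j h)
        rw [Matrix.sub_apply, hSout i j, if_neg hne, hdiag i j hne, sub_zero]
        norm_num
      · intro h; exact absurd (Finset.mem_univ _) h
    rw [hLHS, hclip]
    have hkey := key_col (fun i => A i j) (E j) (Sin (E j) j) τ T (hσ0 j) hτ0 hT0
      (hcol j).1 (hcol j).2
    refine le_trans hkey (le_of_eq ?_)
    apply Finset.sum_congr rfl
    intro i _
    rw [Matrix.sub_apply, hSin i]
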